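/- Let P ∈ Sp(1,1), and let X, Y be right eigenvectors of P associated to complex right eigenvalues λ, μ respectively. If λ̄μ ≠ 1 and λμ ≠ 1, then ⟨X, Y⟩ = 0. -/

import Mathlib

noncomputable section
open Matrix Polynomial

abbrev Hq := Quaternion ℝ

def toH (z : ℂ) : Hq := ⟨z.re, z.im, 0, 0⟩

def toC1 (q : Hq) : ℂ := ⟨q.re, q.imI⟩
def toC2 (q : Hq) : ℂ := ⟨q.imJ, q.imK⟩

def chi {m : ℕ} (P : Matrix (Fin m) (Fin m) Hq) :
    Matrix (Fin m ⊕ Fin m) (Fin m ⊕ Fin m) ℂ :=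
  Matrix.fromBlocks (P.map toC1) (P.map toC2)
    (-(P.map fun q => star (toC2 q))) (P.map fun q => star (toC1 q))

def Jmat : Matrix (Fin 2) (Fin 2) Hq := !![1, 0; 0, -1]

/-- `P ∈ Sp(1,1)` iff `Pᴴ J P = J`. -/
def InSp (P : Matrix (Fin 2) (Fin 2) Hq) : Prop := Pᴴ * Jmat * P = Jmat

/-- The signature (1,1) Hermitian form `⟨X, Y⟩ = Xᴴ J Y` on ℍ². -/
def herm (X Y : Fin 2 → Hq) : Hq := star (X 0) * Y 0 - star (X 1) * Y 1


lemma toC1_conj (l m : ℂ) (q : Hq) :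
    toC1 (star (toH l) * q * toH m) = (starRingEnd ℂ l) * m * toC1 q := by
  simp [toC1, Quaternion.ext_iff, Complex.ext_iff]
  simp [toH]
  constructor <;> ring

lemma toC2_conj (l m : ℂ) (q : Hq) :
    toC2 (star (toH l) * q * toH m) = (starRingEnd ℂ l) * (starRingEnd ℂ m) * toC2 q := by
  simp [toC2, Quaternion.ext_iff, Complex.ext_iff]
  simp [toH]
  constructor <;> ring

lemma q_eq_zero (q : Hq) (ha : toC1 q = 0) (hb : toC2 q = 0) : q = 0 := by
  simp [toC1, toC2, Complex.ext_iff] at ha hb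
  ext <;> simp [ha.1, ha.2, hb.1, hb.2] <;> rfl

lemma aux_expand {a b c d e f g h x0 x1 y0 y1 : Hq}
    (h00 : a * c + -(e * g) = 1) (h01 : a * d + -(e * h) = 0)
    (h10 : b * c + -(f * g) = 0) (h11 : b * d + -(f * h) = -1) :
    (x0 * a + x1 * b) * (c * y0 + d * y1) - (x0 * e + x1 * f) * (g * y0 + h * y1)
      = x0 * y0 - x1 * y1 := by
  have : (x0 * a + x1 * b) * (c * y0 + d * y1) - (x0 * e + x1 * f) * (g * y0 + h * y1)
      = x0 * (a * c + -(e * g)) * y0 + x0 * (a * d + -(e * h)) * y1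
        + x1 * (b * c + -(f * g)) * y0 + x1 * (b * d + -(f * h)) * y1 := by noncomm_ring
  rw [this, h00, h01, h10, h11]; noncomm_ring

lemma herm_invariant (P : Matrix (Fin 2) (Fin 2) Hq) (hP : InSp P) (X Y : Fin 2 → Hq) :
    herm (P.mulVec X) (P.mulVec Y) = herm X Y := by
  have h00 := congrFun (congrFun hP 0) 0
  have h01 := congrFun (congrFun hP 0) 1
  have h10 := congrFun (congrFun hP 1) 0
  have h11 := congrFun (congrFun hP 1) 1
  simp [InSp, Jmat, Matrix.mul_apply, Fin.sum_univ_two, conjTranspose_apply] at h00 h01 h10 h11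
  simp only [herm, mulVec, dotProduct, Fin.sum_univ_two, star_add, StarMul.star_mul]
  exact aux_expand h00 h01 h10 h11

/-- Right eigenvectors of `P ∈ Sp(1,1)` with complex eigenvalues `λ, μ` satisfying
`λ̄μ ≠ 1` and `λμ ≠ 1` are orthogonal. -/
theorem eigenvectors_orthogonal (P : Matrix (Fin 2) (Fin 2) Hq) (hP : InSp P)
    (lam mu : ℂ) (X Y : Fin 2 → Hq) (hX : X ≠ 0) (hY : Y ≠ 0)
    (heigX : P.mulVec X = fun i => X i * toH lam)
    (heigY : P.mulVec Y = fun i => Y i * toH mu)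
    (h1 : starRingEnd ℂ lam * mu ≠ 1) (h2 : lam * mu ≠ 1) :
    herm X Y = 0 := by
  have scale : herm (fun i => X i * toH lam) (fun i => Y i * toH mu)
      = star (toH lam) * herm X Y * toH mu := by
    simp only [herm, StarMul.star_mul]
    noncomm_ring
  have key : herm X Y = star (toH lam) * herm X Y * toH mu := by
    conv_lhs => rw [← herm_invariant P hP X Y, heigX, heigY, scale]
  have ha : toC1 (herm X Y) = 0 := by
    have := congrArg toC1 key
    rw [toC1_conj] at this
    have h' : (starRingEnd ℂ lam * mu - 1) * toC1 (herm X Y) = 0 := by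
      rw [sub_mul, one_mul, ← this, sub_self]
    rcases mul_eq_zero.mp h' with h'' | h''
    · exact absurd (sub_eq_zero.mp h'') h1
    · exact h''
  have hb : toC2 (herm X Y) = 0 := by
    have := congrArg toC2 key
    rw [toC2_conj] at this
    have hne : starRingEnd ℂ lam * starRingEnd ℂ mu ≠ 1 := by
      rw [← _root_.map_mul]
      intro hc
      apply h2
      have := congrArg (starRingEnd ℂ) hc
      simpa using this
    have h' : (starRingEnd ℂ lam * starRingEnd ℂ mu - 1) * toC2 (herm X Y) = 0 := by
      rw [sub_mul, one_mul, ← this, sub_self]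
    rcases mul_eq_zero.mp h' with h'' | h''
    · exact absurd (sub_eq_zero.mp h'') hne
    · exact h''
  exact q_eq_zero _ ha hb
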